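/- Let C = A[η_1,…,η_N] with A = k[z_1,…,z_N], Δ = c·∑_i ∂_{z_i}∂_{η_i} for a scalar c, and define Ψ on C^{−m} by Ψ(ξ(z)·η_{i_1}⋯η_{i_m}) = q^m · T_q(ξ(z)·∏_{j∉{i_1,…,i_m}} z_j) / (∏_{j∉{i_1,…,i_m}} z_j) · η_{i_1}⋯η_{i_m}. Then Ψ is a cochain map: Ψ∘Δ = Δ∘Ψ. -/

import Mathlib

/-!
STATEMENT 15: Let `C = A[η_1,…,η_N]` with `A = k[[z_1,…,z_N]]`,
`Δ = c · ∑_i ∂_{z_i} ∂_{η_i}` for a scalar `c`, and define `Ψ` on `C^{−m}` by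
`Ψ(ξ(z)·η_{i_1}⋯η_{i_m})
  = q^m · T_q(ξ(z)·∏_{j∉{i_1,…,i_m}} z_j) / (∏_{j∉{i_1,…,i_m}} z_j)
    · η_{i_1}⋯η_{i_m}`.
Then `Ψ` is a cochain map: `Ψ ∘ Δ = Δ ∘ Ψ`.

`C` is modeled as `Finset (Fin N) → A` (coefficients of the monomials `η_S`);
the division by `∏_{j ∉ S} z_j` is realized as the coefficient shift
`w ↦ w + 𝟙_{Sᶜ}` (which is exactly division on the image of
`g ↦ T_q((∏_{j∉S} z_j)·g)`, where every surviving monomial is divisible by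
`∏_{j∉S} z_j`).
-/

variable {k : Type*} [Field k] [CharZero k] {N : ℕ}

/-- `C = A[η]`, as functions from subsets (η-monomials) to `A = k[[z]]`. -/
abbrev SuperA (k : Type*) [Field k] (N : ℕ) := Finset (Fin N) → MvPowerSeries (Fin N) k

/-- Koszul sign `(-1)^(#{j ∈ S : j < i})`. -/
def etaSign (S : Finset (Fin N)) (i : Fin N) : ℤ := (-1 : ℤ) ^ ((S.filter (· < i)).card)

/-- The partial derivative `∂/∂z_i` on power series, coefficientwise. -/
noncomputable def zDeriv (i : Fin N) (f : MvPowerSeries (Fin N) k) :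
    MvPowerSeries (Fin N) k :=
  fun w => ((w i + 1 : ℕ) : k) * f (w + Finsupp.single i 1)

/-- The operator `Δ = c · ∑_i ∂_{z_i} ∂_{η_i}` on `C`. -/
noncomputable def DeltaC (c : k) (f : SuperA k N) : SuperA k N := fun S =>
  c • ∑ i ∈ Sᶜ, etaSign S i • zDeriv i (f (insert i S))

/-- The Dwork shift operator `T_q`. -/
noncomputable def Tq (q : ℕ) (f : MvPowerSeries (Fin N) k) : MvPowerSeries (Fin N) k :=
  fun w => f (q • w)

/-- The indicator multi-index `𝟙_{Sᶜ} = ∑_{j ∉ S} e_j`. -/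
noncomputable def indC (S : Finset (Fin N)) : Fin N →₀ ℕ :=
  ∑ j ∈ Sᶜ, Finsupp.single j 1

/-- Division by `∏_{j ∉ S} z_j`, as a coefficient shift. -/
noncomputable def divProdC (S : Finset (Fin N)) (g : MvPowerSeries (Fin N) k) :
    MvPowerSeries (Fin N) k :=
  fun w => g (w + indC S)

/-- The operator `Ψ`:
`Ψ(ξ·η_S) = q^{|S|} · T_q(ξ·∏_{j∉S} z_j)/(∏_{j∉S} z_j) · η_S`. -/
noncomputable def PsiC (q : ℕ) (f : SuperA k N) : SuperA k N := fun S =>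
  ((q : k) ^ S.card) • divProdC S (Tq q ((∏ j ∈ Sᶜ, MvPowerSeries.X j) * f S))


set_option linter.unusedSectionVars false

lemma indC_apply (S : Finset (Fin N)) (j : Fin N) :
    indC S j = if j ∈ S then 0 else 1 := by
  classical
  rw [indC]
  rw [show ((∑ t ∈ Sᶜ, Finsupp.single t 1 : Fin N →₀ ℕ) j)
      = ∑ t ∈ Sᶜ, (Finsupp.single t 1 : Fin N →₀ ℕ) j from Finsupp.finset_sum_apply _ _ _]
  simp [Finsupp.single_apply, Finset.sum_ite_eq', Finset.mem_compl]

lemma prod_X_monomial (T : Finset (Fin N)) :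
    (∏ j ∈ T, (MvPowerSeries.X j : MvPowerSeries (Fin N) k))
      = MvPowerSeries.monomial (∑ j ∈ T, Finsupp.single j 1) 1 := by
  classical
  induction T using Finset.induction_on with
  | empty => simp [MvPowerSeries.monomial_zero_one]
  | insert _ _ h ih =>
      rw [Finset.prod_insert h, Finset.sum_insert h, ih, MvPowerSeries.X_def,
        MvPowerSeries.monomial_mul_monomial, one_mul]

lemma monomial_one_mul_apply (d v : Fin N →₀ ℕ) (g : MvPowerSeries (Fin N) k) :
    ((MvPowerSeries.monomial d 1 : MvPowerSeries (Fin N) k) * g) v = if d ≤ v then g (v - d) else 0 := by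
  classical
  have h := MvPowerSeries.coeff_monomial_mul (R := k) (m := v) (n := d) (φ := g) 1
  simpa [MvPowerSeries.coeff_apply] using h

lemma mps_smul_apply (a : k) (g : MvPowerSeries (Fin N) k) (v : Fin N →₀ ℕ) :
    (a • g) v = a * g v := rfl

lemma mps_zsmul_apply (n : ℤ) (g : MvPowerSeries (Fin N) k) (v : Fin N →₀ ℕ) :
    (n • g) v = n • g v := rfl

lemma mps_sum_apply {α : Type*} (T : Finset α) (g : α → MvPowerSeries (Fin N) k)
    (v : Fin N →₀ ℕ) : (∑ i ∈ T, g i) v = ∑ i ∈ T, (g i) v :=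
  map_sum (MvPowerSeries.coeff v) g T

/-- `Ψ` is a cochain map: `Ψ ∘ Δ = Δ ∘ Ψ`. -/
theorem Psi_cochain_map (q : ℕ) (hq : 0 < q) (c : k) (f : SuperA k N) :
    PsiC q (DeltaC c f) = DeltaC c (PsiC q f) := by
  classical
  funext S
  funext w
  have hle : indC S ≤ q • (w + indC S) := by
    rw [Finsupp.le_def]
    intro j
    rw [Finsupp.smul_apply, Finsupp.add_apply, smul_eq_mul]
    calc indC S j ≤ w j + indC S j := Nat.le_add_left _ _
      _ ≤ q * (w j + indC S j) := Nat.le_mul_of_pos_left _ hq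
  have hle' : ∀ i : Fin N, i ∉ S →
      indC (insert i S) ≤ q • (w + Finsupp.single i 1 + indC (insert i S)) := by
    intro i hi
    rw [Finsupp.le_def]
    intro j
    rw [Finsupp.smul_apply, Finsupp.add_apply, Finsupp.add_apply, smul_eq_mul]
    calc indC (insert i S) j ≤ (w j + Finsupp.single i 1 j) + indC (insert i S) j :=
          Nat.le_add_left _ _
      _ ≤ q * _ := Nat.le_mul_of_pos_left _ hq
  have harg : ∀ i : Fin N, i ∉ S →
      (q • (w + indC S) - indC S) + Finsupp.single i 1
        = q • (w + Finsupp.single i 1 + indC (insert i S)) - indC (insert i S) := by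
    intro i hi
    ext j
    rcases eq_or_ne i j with rfl | hij
    · have h1 : (Finsupp.single i 1 : Fin N →₀ ℕ) i = 1 := Finsupp.single_eq_same
      have h2 : indC S i = 1 := by rw [indC_apply, if_neg hi]
      have h3 : indC (insert i S) i = 0 := by
        rw [indC_apply, if_pos (Finset.mem_insert_self i S)]
      simp only [Finsupp.add_apply, Finsupp.tsub_apply, Finsupp.smul_apply, smul_eq_mul,
        h1, h2, h3, add_zero, Nat.sub_zero]
      have ht : 0 < q * (w i + 1) := Nat.mul_pos hq (Nat.succ_pos _)
      omega
    · have h1 : (Finsupp.single i 1 : Fin N →₀ ℕ) j = 0 := Finsupp.single_eq_of_ne' hij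
      have h2 : indC (insert i S) j = indC S j := by
        rw [indC_apply, indC_apply]
        simp [Finset.mem_insert, (Ne.symm hij : j ≠ i)]
      simp only [Finsupp.add_apply, Finsupp.tsub_apply, Finsupp.smul_apply, smul_eq_mul,
        h1, h2, add_zero]
  have hcoef : ∀ i : Fin N, i ∉ S →
      (((q • (w + indC S) - indC S) i + 1 : ℕ) : k) = (q : k) * ((w i + 1 : ℕ) : k) := by
    intro i hi
    have h : (q • (w + indC S) - indC S) i + 1 = q * (w i + 1) := by
      rw [Finsupp.tsub_apply, Finsupp.smul_apply, Finsupp.add_apply, smul_eq_mul,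
        indC_apply, if_neg hi]
      have ht : 0 < q * (w i + 1) := Nat.mul_pos hq (Nat.succ_pos _)
      omega
    rw [h]
    push_cast
    ring
  have lhs_eq : PsiC q (DeltaC c f) S w
      = (q : k) ^ S.card * (c * ∑ i ∈ Sᶜ, etaSign S i •
          ((((q • (w + indC S) - indC S) i + 1 : ℕ) : k) *
            f (insert i S) ((q • (w + indC S) - indC S) + Finsupp.single i 1))) := by
    simp only [PsiC, mps_smul_apply, divProdC, Tq, prod_X_monomial]
    rw [show (∑ j ∈ Sᶜ, Finsupp.single j 1 : Fin N →₀ ℕ) = indC S from rfl,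
      monomial_one_mul_apply, if_pos hle]
    simp only [DeltaC, mps_smul_apply, mps_sum_apply, mps_zsmul_apply, zDeriv]
  have rhs_eq : DeltaC c (PsiC q f) S w
      = c * ∑ i ∈ Sᶜ, etaSign S i •
          (((w i + 1 : ℕ) : k) * ((q : k) ^ (S.card + 1) *
            f (insert i S) ((q • (w + indC S) - indC S) + Finsupp.single i 1))) := by
    simp only [DeltaC, mps_smul_apply, mps_sum_apply, mps_zsmul_apply, zDeriv]
    congr 1
    refine Finset.sum_congr rfl fun i hi => ?_
    rw [Finset.mem_compl] at hi
    simp only [PsiC, mps_smul_apply, divProdC, Tq, prod_X_monomial]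
    rw [show (∑ j ∈ (insert i S)ᶜ, Finsupp.single j 1 : Fin N →₀ ℕ)
        = indC (insert i S) from rfl,
      monomial_one_mul_apply, if_pos (hle' i hi), ← harg i hi,
      Finset.card_insert_of_notMem hi]
  rw [lhs_eq, rhs_eq, Finset.mul_sum, Finset.mul_sum, Finset.mul_sum]
  refine Finset.sum_congr rfl fun i hi => ?_
  rw [Finset.mem_compl] at hi
  rw [zsmul_eq_mul, zsmul_eq_mul, hcoef i hi]
  push_cast
  ring
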